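/- Let H and K be complex Hilbert spaces, A, B ∈ B(H) with 0 < b₁I ≤ A ≤ a₁I and 0 < b₂I ≤ B ≤ a₂I for scalars 0 < bᵢ < aᵢ (i = 1,2), let Φ : B(H) → B(K) be a positive linear map, and let α ∈ (0,1). Set μ = a₁b₁((b₂a₁⁻¹)^α − (a₂b₁⁻¹)^α)/(b₁b₂ − a₁a₂) and ν = (a₁a₂(b₂a₁⁻¹)^α − b₁b₂(a₂b₁⁻¹)^α)/(a₁a₂ − b₁b₂). Then Φ(A) #_α Φ(B) − Φ(A #_α B) ≤ ((1−α)(μ/α)^{α/(α−1)} − ν) Φ(A). -/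

import Mathlib

set_option maxHeartbeats 1000000
set_option synthInstance.maxHeartbeats 200000

open scoped InnerProductSpace

noncomputable section

/-- The real power `A ^ r` of a (positive) operator, via the continuous functional calculus. -/
noncomputable def opPow {H : Type} [NormedAddCommGroup H] [InnerProductSpace ℂ H]
    [CompleteSpace H] (A : H →L[ℂ] H) (r : ℝ) : H →L[ℂ] H :=
  cfc (fun t : ℝ => t ^ r) A

/-- The operator mean `A σ B = A^{1/2} f(A^{-1/2} B A^{-1/2}) A^{1/2}` associated with the
representing function `f`. -/
noncomputable def opMean {H : Type} [NormedAddCommGroup H] [InnerProductSpace ℂ H]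
    [CompleteSpace H] (f : ℝ → ℝ) (A B : H →L[ℂ] H) : H →L[ℂ] H :=
  opPow A (1/2) * cfc f (opPow A (-(1/2)) * B * opPow A (-(1/2))) * opPow A (1/2)

/-- The weighted geometric mean `A #_α B = A^{1/2} (A^{-1/2} B A^{-1/2})^α A^{1/2}`. -/
noncomputable def geoMean {H : Type} [NormedAddCommGroup H] [InnerProductSpace ℂ H]
    [CompleteSpace H] (α : ℝ) (A B : H →L[ℂ] H) : H →L[ℂ] H :=
  opMean (fun t : ℝ => t ^ α) A B

/-- `f : (0,∞) → (0,∞)` is operator monotone: for all positive invertible operators `X ≤ Y`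
(on any complex Hilbert space), `f(X) ≤ f(Y)` in the Loewner order. -/
def IsOperatorMonotone (f : ℝ → ℝ) : Prop :=
  ∀ (H : Type) [NormedAddCommGroup H] [InnerProductSpace ℂ H] [CompleteSpace H]
    (X Y : H →L[ℂ] H), 0 ≤ X → IsUnit X → 0 ≤ Y → IsUnit Y → X ≤ Y →
      cfc f X ≤ cfc f Y

private lemma tangent_aux {α μ : ℝ} (hα0 : 0 < α) (hα1 : α < 1) (hμ : 0 < μ) :
    ∀ t : ℝ, 0 ≤ t → t ^ α ≤ μ * t + (1 - α) * (μ / α) ^ (α / (α - 1)) := by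
  intro t ht
  set l : ℝ := (μ / α) ^ (1 / (α - 1)) with hl
  have hμα : 0 < μ / α := div_pos hμ hα0
  have hlpos : 0 < l := Real.rpow_pos_of_pos hμα _
  have hne : α - 1 ≠ 0 := by linarith
  have h1 : l ^ (α - 1) = μ / α := by
    rw [hl, ← Real.rpow_mul hμα.le, one_div, inv_mul_cancel₀ hne, Real.rpow_one]
  have h2 : l ^ α = (μ / α) ^ (α / (α - 1)) := by
    rw [hl, ← Real.rpow_mul hμα.le, div_eq_mul_inv α, mul_comm α, ← one_div]
  have hgm : t ^ α * l ^ (1 - α) ≤ α * t + (1 - α) * l :=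
    Real.geom_mean_le_arith_mean2_weighted hα0.le (by linarith) ht hlpos.le (by ring)
  have hmul : t ^ α * l ^ (1 - α) * l ^ (α - 1) = t ^ α := by
    rw [mul_assoc, ← Real.rpow_add hlpos]
    norm_num
  have hpos : (0:ℝ) < l ^ (α - 1) := Real.rpow_pos_of_pos hlpos _
  calc t ^ α = t ^ α * l ^ (1 - α) * l ^ (α - 1) := hmul.symm
    _ ≤ (α * t + (1 - α) * l) * l ^ (α - 1) := by
        exact mul_le_mul_of_nonneg_right hgm hpos.le
    _ = α * (μ / α) * t + (1 - α) * (l * l ^ (α - 1)) := by rw [h1]; ring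
    _ = μ * t + (1 - α) * (μ / α) ^ (α / (α - 1)) := by
        rw [mul_div_cancel₀ _ hα0.ne', ← h2]
        nth_rw 1 [← Real.rpow_one l]
        rw [← Real.rpow_add hlpos]
        norm_num

private lemma chord_aux {α m M : ℝ} (hα0 : 0 < α) (hα1 : α < 1) (hm : 0 < m) (hmM : m < M) :
    ∀ t ∈ Set.Icc m M,
      (M ^ α - m ^ α) / (M - m) * t + (M * m ^ α - m * M ^ α) / (M - m) ≤ t ^ α := by
  intro t ht
  obtain ⟨ht1, ht2⟩ := ht
  have hMm : (0:ℝ) < M - m := by linarith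
  have hcc := (Real.strictConcaveOn_rpow hα0 hα1).concaveOn
  have key := hcc.2 (Set.mem_Ici.mpr (le_of_lt hm)) (Set.mem_Ici.mpr (by linarith : (0:ℝ) ≤ M))
    (show (0:ℝ) ≤ (M - t) / (M - m) from div_nonneg (by linarith) hMm.le)
    (show (0:ℝ) ≤ (t - m) / (M - m) from div_nonneg (by linarith) hMm.le)
    (show (M - t) / (M - m) + (t - m) / (M - m) = 1 by field_simp; ring)
  simp only [smul_eq_mul] at key
  have hxy : (M - t) / (M - m) * m + (t - m) / (M - m) * M = t := by
    field_simp
    ring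
  rw [hxy] at key
  have heq : (M ^ α - m ^ α) / (M - m) * t + (M * m ^ α - m * M ^ α) / (M - m)
      = (M - t) / (M - m) * m ^ α + (t - m) / (M - m) * M ^ α := by
    field_simp
    ring
  rw [heq]
  exact key

private lemma op_smul_nonneg {H : Type} [NormedAddCommGroup H] [InnerProductSpace ℂ H]
    [CompleteSpace H] {Z : H →L[ℂ] H} (hZ : 0 ≤ Z) {c : ℝ} (hc : 0 ≤ c) : 0 ≤ c • Z := by
  have h := star_left_conjugate_nonneg hZ ((Real.sqrt c) • (1 : H →L[ℂ] H))
  have hstar : star ((Real.sqrt c) • (1 : H →L[ℂ] H)) = (Real.sqrt c) • 1 := by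
    rw [star_smul, star_one, star_trivial]
  rw [hstar, smul_mul_assoc, one_mul, mul_smul_comm, mul_one, smul_smul,
    Real.mul_self_sqrt hc] at h
  exact h

private lemma op_smul_le_smul {H : Type} [NormedAddCommGroup H] [InnerProductSpace ℂ H]
    [CompleteSpace H] {X Y : H →L[ℂ] H} (h : X ≤ Y) {c : ℝ} (hc : 0 ≤ c) : c • X ≤ c • Y := by
  rw [← sub_nonneg, ← smul_sub]
  exact op_smul_nonneg (sub_nonneg.mpr h) hc

/-- **Additive reverse of Ando's inequality (general weight).** -/
theorem stmt_4 {H K : Type} [NormedAddCommGroup H] [InnerProductSpace ℂ H] [CompleteSpace H]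
    [NormedAddCommGroup K] [InnerProductSpace ℂ K] [CompleteSpace K]
    (A B : H →L[ℂ] H) (a₁ b₁ a₂ b₂ : ℝ)
    (hb₁ : 0 < b₁) (hba₁ : b₁ < a₁) (hb₂ : 0 < b₂) (hba₂ : b₂ < a₂)
    (hA₁ : b₁ • (1 : H →L[ℂ] H) ≤ A) (hA₂ : A ≤ a₁ • (1 : H →L[ℂ] H))
    (hB₁ : b₂ • (1 : H →L[ℂ] H) ≤ B) (hB₂ : B ≤ a₂ • (1 : H →L[ℂ] H))
    (Φ : (H →L[ℂ] H) →ₗ[ℂ] (K →L[ℂ] K))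
    (hΦ : ∀ X : H →L[ℂ] H, 0 ≤ X → 0 ≤ Φ X)
    (α : ℝ) (hα : α ∈ Set.Ioo (0 : ℝ) 1)
    (μ ν : ℝ)
    (hμ : μ = a₁ * b₁ * ((b₂ * a₁⁻¹) ^ α - (a₂ * b₁⁻¹) ^ α) / (b₁ * b₂ - a₁ * a₂))
    (hν : ν = (a₁ * a₂ * (b₂ * a₁⁻¹) ^ α - b₁ * b₂ * (a₂ * b₁⁻¹) ^ α) / (a₁ * a₂ - b₁ * b₂)) :
    geoMean α (Φ A) (Φ B) - Φ (geoMean α A B) ≤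
      ((1 - α) * (μ / α) ^ (α / (α - 1)) - ν) • Φ A := by
  obtain ⟨hα0, hα1⟩ := hα
  have ha₁ : 0 < a₁ := hb₁.trans hba₁
  have ha₂ : 0 < a₂ := hb₂.trans hba₂
  set m : ℝ := b₂ / a₁ with hm_def
  set M : ℝ := a₂ / b₁ with hM_def
  have hm : 0 < m := div_pos hb₂ ha₁
  have hM : 0 < M := div_pos ha₂ hb₁
  have hmM : m < M := by
    rw [hm_def, hM_def, div_lt_div_iff₀ ha₁ hb₁]
    nlinarith
  -- rewrite μ and ν in terms of m, M
  have hbb_ne : b₁ * b₂ - a₁ * a₂ ≠ 0 := by nlinarith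
  have haa_ne : a₁ * a₂ - b₁ * b₂ ≠ 0 := by nlinarith
  have hMm_ne : M - m ≠ 0 := by linarith
  have hμ' : μ = (M ^ α - m ^ α) / (M - m) := by
    rw [hμ, show b₂ * a₁⁻¹ = m from (div_eq_mul_inv b₂ a₁).symm,
      show a₂ * b₁⁻¹ = M from (div_eq_mul_inv a₂ b₁).symm,
      div_eq_div_iff hbb_ne hMm_ne]
    rw [hm_def, hM_def]
    field_simp
    ring
  have hν' : ν = (M * m ^ α - m * M ^ α) / (M - m) := by
    rw [hν, show b₂ * a₁⁻¹ = m from (div_eq_mul_inv b₂ a₁).symm,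
      show a₂ * b₁⁻¹ = M from (div_eq_mul_inv a₂ b₁).symm,
      div_eq_div_iff haa_ne hMm_ne]
    rw [hm_def, hM_def]
    field_simp
  have hμpos : 0 < μ := by
    rw [hμ']
    apply div_pos _ (by linarith)
    have := Real.rpow_lt_rpow hm.le hmM hα0
    linarith
  set κ : ℝ := (1 - α) * (μ / α) ^ (α / (α - 1)) with hκ
  have htan := tangent_aux hα0 hα1 hμpos
  have hchord : ∀ t ∈ Set.Icc m M, μ * t + ν ≤ t ^ α := by
    intro t ht
    rw [hμ', hν']
    exact chord_aux hα0 hα1 hm hmM t ht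
  have hνκ : ν ≤ κ := by
    have h1 := hchord m ⟨le_refl m, hmM.le⟩
    have h2 := htan m hm.le
    rw [← hκ] at h2
    linarith
  have hν0 : 0 ≤ ν := by
    rw [hν']
    apply div_nonneg _ (by linarith)
    have hMm1 : (1:ℝ) ≤ M / m := (one_le_div hm).mpr hmM.le
    have := Real.rpow_le_rpow_of_exponent_le hMm1 hα1.le
    rw [Real.rpow_one, Real.div_rpow hM.le hm.le, div_le_div_iff₀ (by positivity) hm] at this
    nlinarith [Real.rpow_pos_of_pos hm α, Real.rpow_pos_of_pos hM α]
  -- selfadjointness and positivity on the H side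
  have hA0 : (0 : H →L[ℂ] H) ≤ A := le_trans (op_smul_nonneg zero_le_one hb₁.le) hA₁
  have hB0 : (0 : H →L[ℂ] H) ≤ B := le_trans (op_smul_nonneg zero_le_one hb₂.le) hB₁
  have hAsa : IsSelfAdjoint A := .of_nonneg hA0
  have hBsa : IsSelfAdjoint B := .of_nonneg hB0
  have hAspec : ∀ x ∈ spectrum ℝ A, x ∈ Set.Icc b₁ a₁ := by
    intro x hx
    constructor
    · exact (algebraMap_le_iff_le_spectrum hAsa).mp
        (by rw [Algebra.algebraMap_eq_smul_one]; exact hA₁) x hx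
    · exact (le_algebraMap_iff_spectrum_le hAsa).mp
        (by rw [Algebra.algebraMap_eq_smul_one]; exact hA₂) x hx
  have hAspec_pos : ∀ x ∈ spectrum ℝ A, 0 < x := fun x hx => hb₁.trans_le (hAspec x hx).1
  have hcA : ∀ r : ℝ, ContinuousOn (fun t : ℝ => t ^ r) (spectrum ℝ A) := fun r x hx =>
    (Real.continuousAt_rpow_const x r (Or.inl (hAspec_pos x hx).ne')).continuousWithinAt
  simp only [geoMean, opMean, opPow]
  set Sh := cfc (fun t : ℝ => t ^ (1/2 : ℝ)) A with hSh_def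
  set Th := cfc (fun t : ℝ => t ^ (-(1/2) : ℝ)) A with hTh_def
  have hShsa : IsSelfAdjoint Sh := cfc_predicate _ A
  have hThsa : IsSelfAdjoint Th := cfc_predicate _ A
  have hShSh : Sh * Sh = A := by
    rw [hSh_def, ← cfc_mul _ _ A (hcA _) (hcA _)]
    rw [show (fun t : ℝ => t ^ (1/2:ℝ) * t ^ (1/2:ℝ)) = fun t : ℝ => t ^ (1/2:ℝ) * t ^ (1/2:ℝ) from rfl]
    have : cfc (fun t : ℝ => t ^ (1/2:ℝ) * t ^ (1/2:ℝ)) A = cfc (id : ℝ → ℝ) A := by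
      apply cfc_congr
      intro x hx
      show x ^ (1/2:ℝ) * x ^ (1/2:ℝ) = id x
      rw [← Real.rpow_add (hAspec_pos x hx)]
      norm_num
    rw [this, cfc_id ℝ A hAsa]
  have hShTh : Sh * Th = 1 := by
    rw [hSh_def, hTh_def, ← cfc_mul _ _ A (hcA _) (hcA _)]
    have : cfc (fun t : ℝ => t ^ (1/2:ℝ) * t ^ (-(1/2):ℝ)) A = cfc (fun _ : ℝ => (1:ℝ)) A := by
      apply cfc_congr
      intro x hx
      show x ^ (1/2:ℝ) * x ^ (-(1/2):ℝ) = 1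
      rw [← Real.rpow_add (hAspec_pos x hx)]
      norm_num
    rw [this, cfc_const _ _ hAsa, map_one]
  have hThSh : Th * Sh = 1 := by
    rw [hSh_def, hTh_def, ← cfc_mul _ _ A (hcA _) (hcA _)]
    have : cfc (fun t : ℝ => t ^ (-(1/2):ℝ) * t ^ (1/2:ℝ)) A = cfc (fun _ : ℝ => (1:ℝ)) A := by
      apply cfc_congr
      intro x hx
      show x ^ (-(1/2):ℝ) * x ^ (1/2:ℝ) = 1
      rw [← Real.rpow_add (hAspec_pos x hx)]
      norm_num
    rw [this, cfc_const _ _ hAsa, map_one]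
  have hThTh : Th * Th = cfc (fun t : ℝ => t ^ (-1 : ℝ)) A := by
    rw [hTh_def, ← cfc_mul _ _ A (hcA _) (hcA _)]
    apply cfc_congr
    intro x hx
    show x ^ (-(1/2):ℝ) * x ^ (-(1/2):ℝ) = x ^ (-1:ℝ)
    rw [← Real.rpow_add (hAspec_pos x hx)]
    norm_num
  -- bounds on Th * Th = A⁻¹
  have hinv_lb : algebraMap ℝ (H →L[ℂ] H) a₁⁻¹ ≤ Th * Th := by
    rw [hThTh]
    refine (algebraMap_le_cfc_iff _ _ A (hcA _) hAsa).mpr fun x hx => ?_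
    rw [Real.rpow_neg_one]
    exact inv_anti₀ (hAspec_pos x hx) (hAspec x hx).2
  have hinv_ub : Th * Th ≤ algebraMap ℝ (H →L[ℂ] H) b₁⁻¹ := by
    rw [hThTh]
    refine (cfc_le_algebraMap_iff _ _ A (hcA _) hAsa).mpr fun x hx => ?_
    rw [Real.rpow_neg_one]
    exact inv_anti₀ hb₁ (hAspec x hx).1
  set C := Th * B * Th with hC_def
  have hC0 : (0 : H →L[ℂ] H) ≤ C := by
    have := star_left_conjugate_nonneg hB0 Th
    rwa [hThsa.star_eq] at this
  have hCsa : IsSelfAdjoint C := .of_nonneg hC0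
  have hCl : m • (1 : H →L[ℂ] H) ≤ C := by
    have h1 : Th * (b₂ • (1 : H →L[ℂ] H)) * Th ≤ C := by
      have := star_left_conjugate_le_conjugate hB₁ Th
      rwa [hThsa.star_eq] at this
    have h2 : Th * (b₂ • (1 : H →L[ℂ] H)) * Th = b₂ • (Th * Th) := by
      rw [mul_smul_comm, mul_one, smul_mul_assoc]
    rw [h2] at h1
    refine le_trans ?_ h1
    have := op_smul_le_smul hinv_lb hb₂.le
    rw [Algebra.algebraMap_eq_smul_one, smul_smul, ← div_eq_mul_inv] at this
    exact this
  have hCu : C ≤ M • (1 : H →L[ℂ] H) := by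
    have h1 : C ≤ Th * (a₂ • (1 : H →L[ℂ] H)) * Th := by
      have := star_left_conjugate_le_conjugate hB₂ Th
      rwa [hThsa.star_eq] at this
    have h2 : Th * (a₂ • (1 : H →L[ℂ] H)) * Th = a₂ • (Th * Th) := by
      rw [mul_smul_comm, mul_one, smul_mul_assoc]
    rw [h2] at h1
    refine le_trans h1 ?_
    have := op_smul_le_smul hinv_ub ha₂.le
    rw [Algebra.algebraMap_eq_smul_one, smul_smul, ← div_eq_mul_inv] at this
    exact this
  have hCspec : ∀ x ∈ spectrum ℝ C, x ∈ Set.Icc m M := by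
    intro x hx
    constructor
    · exact (algebraMap_le_iff_le_spectrum hCsa).mp
        (by rw [Algebra.algebraMap_eq_smul_one]; exact hCl) x hx
    · exact (le_algebraMap_iff_spectrum_le hCsa).mp
        (by rw [Algebra.algebraMap_eq_smul_one]; exact hCu) x hx
  have hCspec_pos : ∀ x ∈ spectrum ℝ C, 0 ≤ x := fun x hx => (hm.trans_le (hCspec x hx).1).le
  have hcC : ContinuousOn (fun t : ℝ => t ^ α) (spectrum ℝ C) := fun x hx =>
    (Real.continuousAt_rpow_const x α (Or.inr hα0.le)).continuousWithinAt
  have hlinC : ContinuousOn (fun t : ℝ => μ * t + ν) (spectrum ℝ C) := by fun_prop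
  -- chord bound on C
  have hchordC : μ • C + ν • (1 : H →L[ℂ] H) ≤ cfc (fun t : ℝ => t ^ α) C := by
    have h1 : cfc (fun t : ℝ => μ * t + ν) C ≤ cfc (fun t : ℝ => t ^ α) C :=
      (cfc_le_iff _ _ C hlinC hcC hCsa).mpr fun x hx => hchord x (hCspec x hx)
    have h2 : cfc (fun t : ℝ => μ * t + ν) C = μ • C + ν • (1 : H →L[ℂ] H) := by
      rw [cfc_add (a := C) (f := fun t : ℝ => μ * t) (g := fun _ : ℝ => ν) (by fun_prop)
        (by fun_prop), cfc_const_mul _ _ C (by fun_prop), cfc_id' ℝ C hCsa,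
        cfc_const _ _ hCsa, Algebra.algebraMap_eq_smul_one]
    rwa [h2] at h1
  -- conjugate by Sh
  have hHside : μ • B + ν • A ≤ Sh * cfc (fun t : ℝ => t ^ α) C * Sh := by
    have h1 := star_left_conjugate_le_conjugate hchordC Sh
    rw [hShsa.star_eq] at h1
    refine (le_of_eq ?_).trans h1
    rw [mul_add, add_mul, mul_smul_comm, smul_mul_assoc, mul_smul_comm, smul_mul_assoc, mul_one]
    rw [hC_def, show Sh * (Th * B * Th) * Sh = Sh * Th * B * (Th * Sh) by noncomm_ring,
      hShTh, hThSh, one_mul, mul_one, hShSh]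
  -- apply Φ
  have hΦmono : ∀ X Y : H →L[ℂ] H, X ≤ Y → Φ X ≤ Φ Y := by
    intro X Y h
    rw [← sub_nonneg, ← map_sub]
    exact hΦ _ (sub_nonneg.mpr h)
  have hΦsmul : ∀ (c : ℝ) (X : H →L[ℂ] H), Φ (c • X) = c • Φ X := by
    intro c X
    rw [← algebraMap_smul ℂ c X, map_smul, algebraMap_smul]
  have hΦstep : μ • Φ B + ν • Φ A ≤ Φ (Sh * cfc (fun t : ℝ => t ^ α) C * Sh) := by
    have := hΦmono _ _ hHside
    rwa [map_add, hΦsmul, hΦsmul] at this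
  -- K side
  set P := Φ A with hP_def
  set Q := Φ B with hQ_def
  have hP0 : (0 : K →L[ℂ] K) ≤ P := hΦ A hA0
  have hQ0 : (0 : K →L[ℂ] K) ≤ Q := hΦ B hB0
  have hPsa : IsSelfAdjoint P := .of_nonneg hP0
  have hQsa : IsSelfAdjoint Q := .of_nonneg hQ0
  have hQP : Q ≤ M • P := by
    have hBA : B ≤ M • A := by
      refine le_trans hB₂ ?_
      have := op_smul_le_smul hA₁ hM.le
      rwa [smul_smul, hM_def, div_mul_cancel₀ _ hb₁.ne'] at this
    have := hΦmono _ _ hBA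
    rwa [hΦsmul] at this
  have hPspec : ∀ x ∈ spectrum ℝ P, 0 ≤ x := fun x hx => spectrum_nonneg_of_nonneg hP0 hx
  have hcP : ContinuousOn (fun t : ℝ => t ^ (1/2 : ℝ)) (spectrum ℝ P) := fun x hx =>
    (Real.continuousAt_rpow_const x _ (Or.inr (by norm_num))).continuousWithinAt
  set Sp := cfc (fun t : ℝ => t ^ (1/2 : ℝ)) P with hSp_def
  set Tp := cfc (fun t : ℝ => t ^ (-(1/2) : ℝ)) P with hTp_def
  have hSpsa : IsSelfAdjoint Sp := cfc_predicate _ P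
  have hsq : ∀ x : ℝ, 0 ≤ x → x ^ (1/2:ℝ) * x ^ (1/2:ℝ) = x := by
    intro x hx
    rcases eq_or_lt_of_le hx with h | h
    · rw [← h, Real.zero_rpow (by norm_num), mul_zero]
    · rw [← Real.rpow_add h]; norm_num
  have hSpSp : Sp * Sp = P := by
    rw [hSp_def, ← cfc_mul _ _ P hcP hcP]
    have : cfc (fun t : ℝ => t ^ (1/2:ℝ) * t ^ (1/2:ℝ)) P = cfc (id : ℝ → ℝ) P :=
      cfc_congr fun x hx => hsq x (hPspec x hx)
    rw [this, cfc_id ℝ P hPsa]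
  -- the goal now
  by_cases hu : ContinuousOn (fun t : ℝ => t ^ (-(1/2) : ℝ)) (spectrum ℝ P)
  · -- Tp is a genuine operator
    have hTpsa : IsSelfAdjoint Tp := cfc_predicate _ P
    set D := Tp * Q * Tp with hD_def
    have hD0 : (0 : K →L[ℂ] K) ≤ D := by
      have := star_left_conjugate_nonneg hQ0 Tp
      rwa [hTpsa.star_eq] at this
    have hDsa : IsSelfAdjoint D := .of_nonneg hD0
    have hDspec : ∀ x ∈ spectrum ℝ D, 0 ≤ x := fun x hx => spectrum_nonneg_of_nonneg hD0 hx
    have hcD : ContinuousOn (fun t : ℝ => t ^ α) (spectrum ℝ D) := fun x hx =>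
      (Real.continuousAt_rpow_const x α (Or.inr hα0.le)).continuousWithinAt
    have hlinD : ContinuousOn (fun t : ℝ => μ * t + κ) (spectrum ℝ D) := by fun_prop
    have htanD : cfc (fun t : ℝ => t ^ α) D ≤ μ • D + κ • (1 : K →L[ℂ] K) := by
      have h1 : cfc (fun t : ℝ => t ^ α) D ≤ cfc (fun t : ℝ => μ * t + κ) D :=
        (cfc_le_iff _ _ D hcD hlinD hDsa).mpr fun x hx => htan x (hDspec x hx)
      have h2 : cfc (fun t : ℝ => μ * t + κ) D = μ • D + κ • (1 : K →L[ℂ] K) := by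
        rw [cfc_add (a := D) (f := fun t : ℝ => μ * t) (g := fun _ : ℝ => κ) (by fun_prop)
          (by fun_prop), cfc_const_mul _ _ D (by fun_prop), cfc_id' ℝ D hDsa,
          cfc_const _ _ hDsa, Algebra.algebraMap_eq_smul_one]
      rwa [h2] at h1
    -- the support projection
    set e : ℝ → ℝ := fun t => t ^ (1/2:ℝ) * t ^ (-(1/2):ℝ) with he_def
    have hce : ContinuousOn e (spectrum ℝ P) := hcP.mul hu
    set Ecfc := cfc e P with hE_def
    have hSpTp : Sp * Tp = Ecfc := by
      rw [hSp_def, hTp_def, hE_def, ← cfc_mul _ _ P hcP hu]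
    have hTpSp : Tp * Sp = Ecfc := by
      rw [hSp_def, hTp_def, hE_def, ← cfc_mul _ _ P hu hcP]
      apply cfc_congr
      intro x hx
      simp [he_def, mul_comm]
    set R0 := cfc (fun t => 1 - e t) P with hR0_def
    have hR0sa : IsSelfAdjoint R0 := cfc_predicate _ P
    have hER : Ecfc + R0 = 1 := by
      rw [hE_def, hR0_def, ← cfc_add (a := P) (f := e) (g := fun t => 1 - e t) hce
        (by exact continuousOn_const.sub hce)]
      have : cfc (fun t : ℝ => e t + (1 - e t)) P = cfc (fun _ : ℝ => (1:ℝ)) P :=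
        cfc_congr fun x _ => by ring
      rw [this, cfc_const _ _ hPsa, map_one]
    have he_spec : ∀ x ∈ spectrum ℝ P, (1 - e x) * x * (1 - e x) = 0 := by
      intro x hx
      rcases eq_or_lt_of_le (hPspec x hx) with h | h
      · rw [← h]; ring
      · have : e x = 1 := by
          simp only [he_def]
          rw [← Real.rpow_add h]; norm_num
        rw [this]; ring
    have hRPR : R0 * P * R0 = 0 := by
      have h1 : cfc (fun x : ℝ => (1 - e x) * x * (1 - e x)) P = R0 * P * R0 := by
        rw [cfc_mul (f := fun x : ℝ => (1 - e x) * x) (g := fun x : ℝ => 1 - e x) P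
          (by exact (continuousOn_const.sub hce).mul continuousOn_id)
          (by exact continuousOn_const.sub hce),
          cfc_mul (f := fun x : ℝ => 1 - e x) (g := fun x : ℝ => x) P
          (by exact continuousOn_const.sub hce) continuousOn_id,
          cfc_id' ℝ P hPsa, hR0_def]
      rw [← h1]
      have : cfc (fun x : ℝ => (1 - e x) * x * (1 - e x)) P = cfc (fun _ : ℝ => (0:ℝ)) P :=
        cfc_congr fun x hx => he_spec x hx
      rw [this]
      simp
    have hRQR : R0 * Q * R0 = 0 := by
      refine le_antisymm ?_ ?_
      · have h1 : R0 * Q * R0 ≤ R0 * (M • P) * R0 := by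
          have := star_left_conjugate_le_conjugate hQP R0
          rwa [hR0sa.star_eq] at this
        rwa [mul_smul_comm, smul_mul_assoc, hRPR, smul_zero] at h1
      · have := star_left_conjugate_nonneg hQ0 R0
        rwa [hR0sa.star_eq] at this
    have hQspec : ∀ x ∈ spectrum ℝ Q, 0 ≤ x := fun x hx => spectrum_nonneg_of_nonneg hQ0 hx
    have hcQ : ContinuousOn (fun t : ℝ => t ^ (1/2 : ℝ)) (spectrum ℝ Q) := fun x hx =>
      (Real.continuousAt_rpow_const x _ (Or.inr (by norm_num))).continuousWithinAt
    set sqQ := cfc (fun t : ℝ => t ^ (1/2 : ℝ)) Q with hsqQ_def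
    have hsqQsa : IsSelfAdjoint sqQ := cfc_predicate _ Q
    have hsqQsq : sqQ * sqQ = Q := by
      rw [hsqQ_def, ← cfc_mul _ _ Q hcQ hcQ]
      have : cfc (fun t : ℝ => t ^ (1/2:ℝ) * t ^ (1/2:ℝ)) Q = cfc (id : ℝ → ℝ) Q :=
        cfc_congr fun x hx => hsq x (hQspec x hx)
      rw [this, cfc_id ℝ Q hQsa]
    have hsqQR0 : sqQ * R0 = 0 := by
      have h1 : star (sqQ * R0) * (sqQ * R0) = R0 * Q * R0 := by
        rw [star_mul, hsqQsa.star_eq, hR0sa.star_eq, ← hsqQsq]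
        noncomm_ring
      have := (CStarRing.star_mul_self_eq_zero_iff (sqQ * R0)).mp (by rw [h1, hRQR])
      exact this
    have hQR0 : Q * R0 = 0 := by
      rw [← hsqQsq, mul_assoc, hsqQR0, mul_zero]
    have hR0Q : R0 * Q = 0 := by
      have : star (Q * R0) = R0 * Q := by rw [star_mul, hR0sa.star_eq, hQsa.star_eq]
      rw [← this, hQR0, star_zero]
    have hEQE : Ecfc * Q * Ecfc = Q := by
      have hE1 : Ecfc = 1 - R0 := by rw [← hER, add_sub_cancel_right]
      rw [hE1, sub_mul, one_mul, hR0Q, sub_zero, mul_sub, mul_one, hQR0, sub_zero]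
    -- conjugate tangent bound by Sp
    have hKside : Sp * cfc (fun t : ℝ => t ^ α) D * Sp ≤ μ • Q + κ • P := by
      have h1 := star_left_conjugate_le_conjugate htanD Sp
      rw [hSpsa.star_eq] at h1
      refine le_trans h1 (le_of_eq ?_)
      rw [mul_add, add_mul, mul_smul_comm, smul_mul_assoc, mul_smul_comm, smul_mul_assoc, mul_one,
        hSpSp]
      congr 1
      congr 1
      rw [hD_def, show Sp * (Tp * Q * Tp) * Sp = Sp * Tp * Q * (Tp * Sp) by noncomm_ring,
        hSpTp, hTpSp, hEQE]
    -- combine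
    calc Sp * cfc (fun t : ℝ => t ^ α) D * Sp - Φ (Sh * cfc (fun t : ℝ => t ^ α) C * Sh)
        ≤ (μ • Q + κ • P) - (μ • Q + ν • P) := sub_le_sub hKside hΦstep
      _ = (κ - ν) • P := by rw [sub_smul]; abel
  · -- degenerate case : Tp = 0
    have hTp0 : Tp = 0 := by
      rw [hTp_def]
      exact cfc_apply_of_not_continuousOn P hu
    have hgeo0 : Sp * cfc (fun t : ℝ => t ^ α) (Tp * Q * Tp) * Sp = 0 := by
      rw [hTp0, zero_mul, mul_zero, cfc_apply_zero, Real.zero_rpow hα0.ne', map_zero,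
        mul_zero, zero_mul]
    rw [hgeo0]
    have hΦg : (0 : K →L[ℂ] K) ≤ Φ (Sh * cfc (fun t : ℝ => t ^ α) C * Sh) :=
      le_trans (by
        have h1 : (0 : K →L[ℂ] K) ≤ μ • Q := op_smul_nonneg hQ0 hμpos.le
        have h2 : (0 : K →L[ℂ] K) ≤ ν • P := op_smul_nonneg hP0 hν0
        calc (0 : K →L[ℂ] K) ≤ μ • Q + ν • P := by
              exact add_nonneg h1 h2
          _ = μ • Q + ν • P := rfl) hΦstep
    have hrhs : (0 : K →L[ℂ] K) ≤ (κ - ν) • P := op_smul_nonneg hP0 (by linarith)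
    calc (0 : K →L[ℂ] K) - Φ (Sh * cfc (fun t : ℝ => t ^ α) C * Sh)
        ≤ 0 := by rwa [zero_sub, neg_nonpos]
      _ ≤ (κ - ν) • P := hrhs
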